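/- For every integer n ≥ 2 and every triple (i,j,k) with 1 ≤ i, j ≤ n−1 and 0 ≤ k ≤ min{i−1, j−1, n−1−i, n−1−j}, the essential set of b(i,j,k) is the singleton {(j,i)}, and the co-rank function of b(i,j,k) satisfies t_{b(i,j,k)}(j,i) = k+1. -/

import Mathlib

namespace Paper

/-- The simple transposition `s_i = (i, i+1)` (1-based) in `S_n`, realized as a
permutation of `Fin n`. For `i` outside `{1, …, n-1}` we set `s i = 1`. -/
def s (n i : ℕ) : Equiv.Perm (Fin n) :=
  if h : 1 ≤ i ∧ i < n then Equiv.swap ⟨i - 1, by omega⟩ ⟨i, by omega⟩ else 1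

/-- The length of a permutation: its number of inversions. -/
def len {n : ℕ} (w : Equiv.Perm (Fin n)) : ℕ :=
  (Finset.univ.filter (fun p : Fin n × Fin n => p.1 < p.2 ∧ w p.2 < w p.1)).card

/-- `i` is a left descent of `w` if `1 ≤ i ≤ n-1` and `ℓ(s_i w) < ℓ(w)`. -/
def IsLeftDescent {n : ℕ} (w : Equiv.Perm (Fin n)) (i : ℕ) : Prop :=
  1 ≤ i ∧ i ≤ n - 1 ∧ len (s n i * w) < len w

/-- `i` is a right descent of `w` if `1 ≤ i ≤ n-1` and `ℓ(w s_i) < ℓ(w)`. -/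
def IsRightDescent {n : ℕ} (w : Equiv.Perm (Fin n)) (i : ℕ) : Prop :=
  1 ≤ i ∧ i ≤ n - 1 ∧ len (w * s n i) < len w

/-- A permutation is bigrassmannian if it has exactly one left descent and
exactly one right descent. -/
def Bigrassmannian {n : ℕ} (w : Equiv.Perm (Fin n)) : Prop :=
  (∃! i, IsLeftDescent w i) ∧ (∃! j, IsRightDescent w j)

/-- One step of the Bruhat order: `w ⋖ t * w` for a transposition `t`
with `ℓ(w) < ℓ(t w)`. -/
def BruhatStep {n : ℕ} (w w' : Equiv.Perm (Fin n)) : Prop :=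
  ∃ a b : Fin n, a ≠ b ∧ w' = Equiv.swap a b * w ∧ len w < len w'

/-- The Bruhat order on `S_n`: the partial order generated by `w < tw` whenever
`t` is a transposition and `ℓ(w) < ℓ(tw)`. -/
def BruhatLE {n : ℕ} : Equiv.Perm (Fin n) → Equiv.Perm (Fin n) → Prop :=
  Relation.ReflTransGen BruhatStep

/-- Strict Bruhat order. -/
def BruhatLT {n : ℕ} (x y : Equiv.Perm (Fin n)) : Prop :=
  BruhatLE x y ∧ x ≠ y

/-- The product `s_a s_{a+1} ⋯ s_b` of consecutive simple transpositions. -/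
def ascRun (n a b : ℕ) : Equiv.Perm (Fin n) :=
  ((List.range (b + 1 - a)).map (fun t => s n (a + t))).prod

/-- For `i ≤ j`: `b(i,j,k) = (s_i ⋯ s_{j+k})(s_{i-1} ⋯ s_{j+k-1}) ⋯ (s_{i-k} ⋯ s_j)`. -/
def bAux (n i j k : ℕ) : Equiv.Perm (Fin n) :=
  ((List.range (k + 1)).map (fun m => ascRun n (i - m) (j + k - m))).prod

/-- The bigrassmannian permutation `b(i,j,k)`; for `j < i` it is `b(j,i,k)⁻¹`. -/
def b (n i j k : ℕ) : Equiv.Perm (Fin n) :=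
  if i ≤ j then bAux n i j k else (bAux n j i k)⁻¹

/-- The value `w(i)` of a permutation `w ∈ S_n` at `i ∈ {1, …, n}`, 1-based. -/
def act {n : ℕ} (w : Equiv.Perm (Fin n)) (i : ℕ) : ℕ :=
  if h : 1 ≤ i ∧ i ≤ n then ((w ⟨i - 1, by omega⟩ : Fin n) : ℕ) + 1 else i

/-- The essential set of a permutation `w ∈ S_n`. -/
def Ess {n : ℕ} (w : Equiv.Perm (Fin n)) : Set (ℕ × ℕ) :=
  {p | 1 ≤ p.1 ∧ p.1 ≤ n - 1 ∧ 1 ≤ p.2 ∧ p.2 ≤ n - 1 ∧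
    p.1 < act w⁻¹ p.2 ∧ p.2 < act w p.1 ∧
    act w (p.1 + 1) ≤ p.2 ∧ act w⁻¹ (p.2 + 1) ≤ p.1}

/-- The rank function `r_w(i,j) = |{k ≤ i : w(k) ≤ j}|` (1-based). -/
def rnk {n : ℕ} (w : Equiv.Perm (Fin n)) (i j : ℕ) : ℕ :=
  ((Finset.Icc 1 i).filter (fun k => act w k ≤ j)).card

/-- The co-rank function `t_w(i,j) = min{i,j} - r_w(i,j)`. -/
def cork {n : ℕ} (w : Equiv.Perm (Fin n)) (i j : ℕ) : ℕ :=
  min i j - rnk w i j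

/-- The set of bigrassmannian permutations `y ≤ w` in Bruhat order. -/
def BSet {n : ℕ} (w : Equiv.Perm (Fin n)) : Set (Equiv.Perm (Fin n)) :=
  {y | Bigrassmannian y ∧ BruhatLE y w}

/-- The set of Bruhat-maximal elements of `BSet w`. -/
def BM {n : ℕ} (w : Equiv.Perm (Fin n)) : Set (Equiv.Perm (Fin n)) :=
  {y ∈ BSet w | ∀ z ∈ BSet w, BruhatLE y z → z = y}


lemma act_one {n : ℕ} (m : ℕ) : act (1 : Equiv.Perm (Fin n)) m = m := by
  unfold act; split
  · next h => simp; omega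
  · rfl

lemma act_eq {n : ℕ} (w : Equiv.Perm (Fin n)) (m : ℕ) (h1 : 1 ≤ m) (h2 : m ≤ n) :
    act w m = ((w ⟨m - 1, by omega⟩ : Fin n) : ℕ) + 1 := by
  unfold act; rw [dif_pos ⟨h1, h2⟩]

lemma act_mem {n : ℕ} (w : Equiv.Perm (Fin n)) (m : ℕ) (h1 : 1 ≤ m) (h2 : m ≤ n) :
    1 ≤ act w m ∧ act w m ≤ n := by
  rw [act_eq w m h1 h2]
  exact ⟨Nat.succ_le_succ (Nat.zero_le _), (w _).isLt⟩

lemma act_mul {n : ℕ} (u v : Equiv.Perm (Fin n)) (m : ℕ) (h1 : 1 ≤ m) (h2 : m ≤ n) :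
    act (u * v) m = act u (act v m) := by
  obtain ⟨hv1, hv2⟩ := act_mem v m h1 h2
  have hx : (⟨act v m - 1, by omega⟩ : Fin n) = v ⟨m - 1, by omega⟩ := by
    apply Fin.ext
    simp only [Fin.val_mk]
    rw [act_eq v m h1 h2]; omega
  rw [act_eq (u * v) m h1 h2, act_eq u _ hv1 hv2, hx]
  simp [Equiv.Perm.mul_apply]

lemma act_s {n : ℕ} (a m : ℕ) (ha1 : 1 ≤ a) (ha2 : a ≤ n - 1) (h1 : 1 ≤ m) (h2 : m ≤ n) :
    act (s n a) m = if m = a then a + 1 else if m = a + 1 then a else m := by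
  have hn : a < n := by omega
  rw [act_eq _ m h1 h2]
  unfold s
  rw [dif_pos ⟨ha1, hn⟩, Equiv.swap_apply_def]
  split_ifs <;> simp only [Fin.mk.injEq, Fin.val_mk] at * <;> omega

lemma ascRun_empty {n a b : ℕ} (h : b + 1 ≤ a) : ascRun n a b = 1 := by
  unfold ascRun
  have h0 : b + 1 - a = 0 := by omega
  rw [h0]; simp

lemma ascRun_succ {n a b : ℕ} (h : a ≤ b) : ascRun n a b = s n a * ascRun n (a + 1) b := by
  unfold ascRun
  have h1 : b + 1 - a = (b + 1 - (a + 1)) + 1 := by omega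
  rw [h1, List.range_succ_eq_map, List.map_cons, List.prod_cons, List.map_map]
  have hf : ((fun t => s n (a + t)) ∘ Nat.succ) = fun t => s n (a + 1 + t) := by
    funext t
    simp only [Function.comp_apply]
    congr 1
    omega
  rw [hf]
  norm_num

lemma act_ascRun {n : ℕ} (d : ℕ) : ∀ a b m : ℕ, b + 1 - a = d → 1 ≤ a → a ≤ b + 1 →
    b ≤ n - 1 → 1 ≤ m → m ≤ n →
    act (ascRun n a b) m = if a ≤ m ∧ m ≤ b then m + 1 else if m = b + 1 then a else m := by
  induction d with
  | zero =>
    intro a b m hd ha hab hb hm1 hm2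
    rw [ascRun_empty (by omega), act_one]
    split_ifs <;> omega
  | succ d ih =>
    intro a b m hd ha hab hb hm1 hm2
    have hab' : a ≤ b := by omega
    rw [ascRun_succ hab', act_mul _ _ m hm1 hm2]
    obtain ⟨hv1, hv2⟩ := act_mem (ascRun n (a + 1) b) m hm1 hm2
    have hin := ih (a + 1) b m (by omega) (by omega) (by omega) hb hm1 hm2
    rw [hin] at hv1 hv2 ⊢
    rw [act_s a _ ha (by omega) hv1 hv2]
    split_ifs <;> omega

lemma bAux_zero {n i j : ℕ} : bAux n i j 0 = ascRun n i j := by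
  unfold bAux
  have h0 : (0 : ℕ) + 1 = 1 := rfl
  rw [h0, List.range_succ, List.range_zero, List.nil_append, List.map_singleton, List.prod_singleton]
  have e1 : i - 0 = i := rfl
  have e2 : j + 0 - 0 = j := rfl
  rw [e1, e2]

lemma bAux_succ {n i j k : ℕ} :
    bAux n i j (k + 1) = ascRun n i (j + k + 1) * bAux n (i - 1) j k := by
  unfold bAux
  rw [List.range_succ_eq_map, List.map_cons, List.prod_cons, List.map_map]
  have e1 : i - 0 = i := rfl
  have e2 : j + (k + 1) - 0 = j + k + 1 := by omega
  have hf : ((fun m => ascRun n (i - m) (j + (k + 1) - m)) ∘ Nat.succ)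
      = fun m => ascRun n (i - 1 - m) (j + k - m) := by
    funext m
    simp only [Function.comp_apply]
    have e3 : i - (m + 1) = i - 1 - m := by omega
    have e4 : j + (k + 1) - (m + 1) = j + k - m := by omega
    rw [e3, e4]
  rw [e1, e2, hf]

lemma act_bAux {n : ℕ} (k : ℕ) : ∀ i j m : ℕ, k + 1 ≤ i → i ≤ j → j + k ≤ n - 1 →
    1 ≤ m → m ≤ n →
    act (bAux n i j k) m =
      if m < i - k then m else if m ≤ j then m + (k + 1)
      else if m ≤ j + k + 1 then m + i - (j + k + 1) else m := by
  induction k with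
  | zero =>
    intro i j m hi hij hj hm1 hm2
    rw [bAux_zero, act_ascRun (j + 1 - i) i j m rfl (by omega) (by omega) (by omega) hm1 hm2]
    split_ifs <;> omega
  | succ k ih =>
    intro i j m hi hij hj hm1 hm2
    rw [bAux_succ, act_mul _ _ m hm1 hm2]
    obtain ⟨hv1, hv2⟩ := act_mem (bAux n (i - 1) j k) m hm1 hm2
    have hin := ih (i - 1) j m (by omega) (by omega) (by omega) hm1 hm2
    rw [hin] at hv1 hv2 ⊢
    rw [act_ascRun (j + k + 2 - i) i (j + k + 1) _ rfl (by omega) (by omega) (by omega) hv1 hv2]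
    split_ifs <;> omega

lemma act_inv {n : ℕ} (w : Equiv.Perm (Fin n)) (m m' : ℕ) (h1 : 1 ≤ m) (h2 : m ≤ n)
    (h1' : 1 ≤ m') (h2' : m' ≤ n) (h : act w m' = m) : act w⁻¹ m = m' := by
  rw [act_eq w m' h1' h2'] at h
  rw [act_eq w⁻¹ m h1 h2]
  have hx : (⟨m - 1, by omega⟩ : Fin n) = w ⟨m' - 1, by omega⟩ := by
    apply Fin.ext
    simp only [Fin.val_mk]
    omega
  rw [hx, ← Equiv.Perm.mul_apply, inv_mul_cancel, Equiv.Perm.one_apply]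
  simp only [Fin.val_mk]
  omega

lemma act_bAux_inv {n : ℕ} (k i j m : ℕ) (hi : k + 1 ≤ i) (hij : i ≤ j) (hj : j + k ≤ n - 1)
    (hm1 : 1 ≤ m) (hm2 : m ≤ n) :
    act (bAux n i j k)⁻¹ m =
      if m < i - k then m else if m ≤ i then m + (j + k + 1) - i
      else if m ≤ j + k + 1 then m - (k + 1) else m := by
  set m' := (if m < i - k then m else if m ≤ i then m + (j + k + 1) - i
      else if m ≤ j + k + 1 then m - (k + 1) else m) with hm'
  have hb1 : 1 ≤ m' := by rw [hm']; split_ifs <;> omega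
  have hb2 : m' ≤ n := by rw [hm']; split_ifs <;> omega
  apply act_inv _ m m' hm1 hm2 hb1 hb2
  rw [act_bAux k i j m' hi hij hj hb1 hb2, hm']
  split_ifs <;> omega

lemma Ess_inv {n : ℕ} (w : Equiv.Perm (Fin n)) : Ess w⁻¹ = {p | (p.2, p.1) ∈ Ess w} := by
  ext p
  simp only [Ess, Set.mem_setOf_eq, inv_inv]
  tauto

lemma Ess_bAux {n : ℕ} (i j k : ℕ) (hn : 2 ≤ n) (hki : k + 1 ≤ i) (hij : i ≤ j)
    (hjn : j + k ≤ n - 1) (hin : i + k ≤ n - 1) :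
    Ess (bAux n i j k) = {(j, i)} := by
  ext ⟨p1, p2⟩
  simp only [Ess, Set.mem_setOf_eq, Set.mem_singleton_iff, Prod.mk.injEq]
  constructor
  · rintro ⟨h1, h2, h3, h4, h5, h6, h7, h8⟩
    rw [act_bAux_inv k i j p2 hki hij hjn h3 (by omega)] at h5
    rw [act_bAux k i j p1 hki hij hjn h1 (by omega)] at h6
    rw [act_bAux k i j (p1 + 1) hki hij hjn (by omega) (by omega)] at h7
    rw [act_bAux_inv k i j (p2 + 1) hki hij hjn (by omega) (by omega)] at h8
    have hp1 : p1 = j := by split_ifs at h6 h7 <;> omega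
    have hp2 : p2 = i := by split_ifs at h5 h8 <;> omega
    exact ⟨hp1, hp2⟩
  · rintro ⟨h9, h10⟩
    rw [h9, h10]
    refine ⟨by omega, by omega, by omega, by omega, ?_, ?_, ?_, ?_⟩
    · rw [act_bAux_inv k i j i hki hij hjn (by omega) (by omega)]
      split_ifs <;> omega
    · rw [act_bAux k i j j hki hij hjn (by omega) (by omega)]
      split_ifs <;> omega
    · rw [act_bAux k i j (j + 1) hki hij hjn (by omega) (by omega)]
      split_ifs <;> omega
    · rw [act_bAux_inv k i j (i + 1) hki hij hjn (by omega) (by omega)]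
      split_ifs <;> omega

lemma cork_bAux {n : ℕ} (i j k : ℕ) (hn : 2 ≤ n) (hki : k + 1 ≤ i) (hij : i ≤ j)
    (hjn : j + k ≤ n - 1) :
    cork (bAux n i j k) j i = k + 1 := by
  have hfilter : (Finset.Icc 1 j).filter (fun m => act (bAux n i j k) m ≤ i)
      = Finset.Icc 1 (i - k - 1) := by
    ext m
    simp only [Finset.mem_filter, Finset.mem_Icc]
    constructor
    · rintro ⟨⟨hm1, hm2⟩, hle⟩
      rw [act_bAux k i j m hki hij hjn hm1 (by omega)] at hle
      split_ifs at hle <;> omega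
    · rintro ⟨hm1, hm2⟩
      refine ⟨⟨hm1, by omega⟩, ?_⟩
      rw [act_bAux k i j m hki hij hjn hm1 (by omega)]
      split_ifs <;> omega
  unfold cork rnk
  rw [hfilter, Nat.card_Icc]
  omega

lemma cork_bAux_inv {n : ℕ} (i j k : ℕ) (hn : 2 ≤ n) (hkj : k + 1 ≤ j) (hji : j ≤ i)
    (hin : i + k ≤ n - 1) :
    cork (bAux n j i k)⁻¹ j i = k + 1 := by
  have hfilter : (Finset.Icc 1 j).filter (fun m => act (bAux n j i k)⁻¹ m ≤ i)
      = Finset.Icc 1 (j - k - 1) := by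
    ext m
    simp only [Finset.mem_filter, Finset.mem_Icc]
    constructor
    · rintro ⟨⟨hm1, hm2⟩, hle⟩
      rw [act_bAux_inv k j i m hkj hji hin hm1 (by omega)] at hle
      split_ifs at hle <;> omega
    · rintro ⟨hm1, hm2⟩
      refine ⟨⟨hm1, by omega⟩, ?_⟩
      rw [act_bAux_inv k j i m hkj hji hin hm1 (by omega)]
      split_ifs <;> omega
  unfold cork rnk
  rw [hfilter, Nat.card_Icc]
  omega

theorem stmt7 (n : ℕ) (hn : 2 ≤ n) (i j k : ℕ)
    (hi1 : 1 ≤ i) (hi2 : i ≤ n - 1) (hj1 : 1 ≤ j) (hj2 : j ≤ n - 1)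
    (hk : k ≤ min (min (i - 1) (j - 1)) (min (n - 1 - i) (n - 1 - j))) :
    Ess (b n i j k) = {(j, i)} ∧ cork (b n i j k) j i = k + 1 := by
  have hki : k + 1 ≤ i := by omega
  have hkj : k + 1 ≤ j := by omega
  have hin : i + k ≤ n - 1 := by omega
  have hjn : j + k ≤ n - 1 := by omega
  by_cases hij : i ≤ j
  · unfold b
    rw [if_pos hij]
    exact ⟨Ess_bAux i j k hn hki hij hjn hin, cork_bAux i j k hn hki hij hjn⟩
  · unfold b
    rw [if_neg hij]
    push_neg at hij
    have hji : j ≤ i := le_of_lt hij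
    constructor
    · rw [Ess_inv, Ess_bAux j i k hn hkj hji hin hjn]
      ext ⟨a, c⟩
      simp only [Set.mem_setOf_eq, Set.mem_singleton_iff, Prod.mk.injEq]
      tauto
    · exact cork_bAux_inv i j k hn hkj hji hin

end Paper
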